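/- (Proposition: joint vs individual martingale property under bicausality) Let (X_t, Y_t)_{t=1}^N be adapted integrable processes under a bicausal coupling π, i.e., for each t, Y_{1:t} is conditionally independent of X_{t+1:N} given X_{1:t}, and symmetrically X_{1:t} is conditionally independent of Y_{t+1:N} given Y_{1:t}. Then E[X_{t+1} | X_{1:t}, Y_{1:t}] = X_t and E[Y_{t+1} | X_{1:t}, Y_{1:t}] = Y_t for all t if and only if E[X_{t+1} | X_{1:t}] = X_t and E[Y_{t+1} | Y_{1:t}] = Y_t for all t. -/

import Mathlib

open MeasureTheory ProbabilityTheory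

open MeasurableSpace Set

section Aux

variable {Ω : Type*} {m' m₁ m₂ : MeasurableSpace Ω} {mΩ : MeasurableSpace Ω}
  [StandardBorelSpace Ω] {μ : Measure Ω} [IsProbabilityMeasure μ]

lemma aux_setIntegral_condexp (hm' : m' ≤ mΩ) (hm₁ : m₁ ≤ mΩ) (hm₂ : m₂ ≤ mΩ)
    (h : CondIndep m' m₁ m₂ hm' μ)
    {u v : Set Ω} (hu : MeasurableSet[m'] u) (hv : MeasurableSet[m₁] v)
    {f : Ω → ℝ} (hf : StronglyMeasurable[m₂] f) (hfi : Integrable f μ) :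
    ∫ x in u ∩ v, (μ[f|m']) x ∂μ = ∫ x in u ∩ v, f x ∂μ := by
  have hprod := (condIndep_iff m' m₁ m₂ hm' hm₁ hm₂ μ).mp h
  have hvmΩ : MeasurableSet v := hm₁ v hv
  -- key computation for indicators
  have key : ∀ t2 : Set Ω, MeasurableSet[m₂] t2 →
      ∫ x in u ∩ v, (μ[t2.indicator (fun _ => (1:ℝ))|m']) x ∂μ
        = ∫ x in u ∩ v, t2.indicator (fun _ => (1:ℝ)) x ∂μ := by
    intro t2 ht2
    have ht2mΩ : MeasurableSet t2 := hm₂ t2 ht2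
    set h2 : Ω → ℝ := μ[t2.indicator (fun _ => (1:ℝ))|m'] with hh2
    have hvind : Integrable (v.indicator h2) μ := integrable_condExp.indicator hvmΩ
    have hmulrep : v.indicator h2 = h2 * v.indicator (fun _ => (1:ℝ)) := by
      funext x
      by_cases hx : x ∈ v <;> simp [Set.indicator, hx]
    have hv1 : Integrable (v.indicator (fun _ => (1:ℝ))) μ :=
      (integrable_const (1:ℝ)).indicator hvmΩ
    have hprod' : μ[v.indicator h2|m'] =ᵐ[μ] μ[(v ∩ t2).indicator (fun _ => (1:ℝ))|m'] := by
      calc μ[v.indicator h2|m'] = μ[h2 * v.indicator (fun _ => (1:ℝ))|m'] := by rw [hmulrep]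
        _ =ᵐ[μ] h2 * μ[v.indicator (fun _ => (1:ℝ))|m'] :=
            condExp_mul_of_stronglyMeasurable_left stronglyMeasurable_condExp (hmulrep ▸ hvind) hv1
        _ = μ[v.indicator (fun _ => (1:ℝ))|m'] * h2 := mul_comm _ _
        _ =ᵐ[μ] μ[(v ∩ t2).indicator (fun _ => (1:ℝ))|m'] := (hprod v t2 hv ht2).symm
    have hvt2 : Integrable ((v ∩ t2).indicator (fun _ => (1:ℝ))) μ :=
      (integrable_const (1:ℝ)).indicator (hvmΩ.inter ht2mΩ)
    calc ∫ x in u ∩ v, h2 x ∂μ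
        = ∫ x in u, v.indicator h2 x ∂μ := (setIntegral_indicator hvmΩ).symm
      _ = ∫ x in u, (μ[v.indicator h2|m']) x ∂μ := (setIntegral_condExp hm' hvind hu).symm
      _ = ∫ x in u, (μ[(v ∩ t2).indicator (fun _ => (1:ℝ))|m']) x ∂μ :=
          integral_congr_ae (ae_restrict_of_ae hprod')
      _ = ∫ x in u, (v ∩ t2).indicator (fun _ => (1:ℝ)) x ∂μ := setIntegral_condExp hm' hvt2 hu
      _ = ∫ x in u ∩ (v ∩ t2), (1:ℝ) ∂μ := setIntegral_indicator (hvmΩ.inter ht2mΩ)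
      _ = ∫ x in (u ∩ v) ∩ t2, (1:ℝ) ∂μ := by rw [Set.inter_assoc]
      _ = ∫ x in u ∩ v, t2.indicator (fun _ => (1:ℝ)) x ∂μ := (setIntegral_indicator ht2mΩ).symm
  set P : (Ω → ℝ) → Prop := fun g => ∫ x in u ∩ v, (μ[g|m']) x ∂μ = ∫ x in u ∩ v, g x ∂μ with hP
  show P f
  refine MemLp.induction_stronglyMeasurable hm₂ ENNReal.one_ne_top P ?_ ?_ ?_ ?_
    (memLp_one_iff_integrable.mpr hfi) hf.aestronglyMeasurable
  · intro c t2 ht2 _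
    have hrep : t2.indicator (fun _ => c) = c • t2.indicator (fun _ => (1:ℝ)) := by
      funext x
      by_cases hx : x ∈ t2 <;> simp [Set.indicator, hx]
    show ∫ x in u ∩ v, (μ[t2.indicator (fun _ => c)|m']) x ∂μ
        = ∫ x in u ∩ v, t2.indicator (fun _ => c) x ∂μ
    rw [hrep]
    calc ∫ x in u ∩ v, (μ[c • t2.indicator (fun _ => (1:ℝ))|m']) x ∂μ
        = ∫ x in u ∩ v, (c • μ[t2.indicator (fun _ => (1:ℝ))|m']) x ∂μ :=
          integral_congr_ae (ae_restrict_of_ae (condExp_smul c _ _))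
      _ = c • ∫ x in u ∩ v, (μ[t2.indicator (fun _ => (1:ℝ))|m']) x ∂μ := by
          simp_rw [Pi.smul_apply]; exact integral_smul c _
      _ = c • ∫ x in u ∩ v, t2.indicator (fun _ => (1:ℝ)) x ∂μ := by rw [key t2 ht2]
      _ = ∫ x in u ∩ v, (c • t2.indicator (fun _ => (1:ℝ))) x ∂μ := by
          simp_rw [Pi.smul_apply]; exact (integral_smul c _).symm
  · intro g₁ g₂ _ hg₁ hg₂ _ _ hPg₁ hPg₂
    have hg₁i : Integrable g₁ μ := memLp_one_iff_integrable.mp hg₁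
    have hg₂i : Integrable g₂ μ := memLp_one_iff_integrable.mp hg₂
    show ∫ x in u ∩ v, (μ[g₁ + g₂|m']) x ∂μ = ∫ x in u ∩ v, (g₁ + g₂) x ∂μ
    calc ∫ x in u ∩ v, (μ[g₁ + g₂|m']) x ∂μ
        = ∫ x in u ∩ v, (μ[g₁|m'] + μ[g₂|m']) x ∂μ :=
          integral_congr_ae (ae_restrict_of_ae (condExp_add hg₁i hg₂i m'))
      _ = ∫ x in u ∩ v, (μ[g₁|m']) x ∂μ + ∫ x in u ∩ v, (μ[g₂|m']) x ∂μ := by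
          simp_rw [Pi.add_apply]
          exact integral_add integrable_condExp.integrableOn integrable_condExp.integrableOn
      _ = ∫ x in u ∩ v, g₁ x ∂μ + ∫ x in u ∩ v, g₂ x ∂μ := by rw [hPg₁, hPg₂]
      _ = ∫ x in u ∩ v, (g₁ + g₂) x ∂μ := by
          simp_rw [Pi.add_apply]
          exact (integral_add hg₁i.integrableOn hg₂i.integrableOn).symm
  · -- closedness
    have heq₁ : (fun g : lpMeas ℝ ℝ m₂ 1 μ => ∫ x in u ∩ v, (μ[(g : Ω → ℝ)|m']) x ∂μ) =
        (fun g : Lp ℝ 1 μ => ∫ x in u ∩ v, (condExpL1CLM ℝ hm' μ g) x ∂μ) ∘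
          (Submodule.subtypeL (lpMeas ℝ ℝ m₂ 1 μ)) := by
      funext g
      refine integral_congr_ae (ae_restrict_of_ae ?_)
      have h1 : μ[(g : Ω → ℝ)|m'] =ᵐ[μ]
          condExpL1CLM ℝ hm' μ ((L1.integrable_coeFn (g : Lp ℝ 1 μ)).toL1 _) :=
        condExp_ae_eq_condExpL1CLM hm' (L1.integrable_coeFn _)
      rwa [Integrable.toL1_coeFn] at h1
    have heq₂ : (fun g : lpMeas ℝ ℝ m₂ 1 μ => ∫ x in u ∩ v, (g : Ω → ℝ) x ∂μ) =
        (fun g : Lp ℝ 1 μ => ∫ x in u ∩ v, g x ∂μ) ∘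
          (Submodule.subtypeL (lpMeas ℝ ℝ m₂ 1 μ)) := rfl
    refine isClosed_eq ?_ ?_
    · rw [heq₁]
      exact ((continuous_setIntegral _).comp (condExpL1CLM ℝ hm' μ).continuous).comp
        (ContinuousLinearMap.continuous _)
    · rw [heq₂]
      exact (continuous_setIntegral _).comp (ContinuousLinearMap.continuous _)
  · intro g₁ g₂ hg hg₁ hPg₁
    show ∫ x in u ∩ v, (μ[g₂|m']) x ∂μ = ∫ x in u ∩ v, g₂ x ∂μ
    calc ∫ x in u ∩ v, (μ[g₂|m']) x ∂μ
        = ∫ x in u ∩ v, (μ[g₁|m']) x ∂μ :=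
          integral_congr_ae (ae_restrict_of_ae (condExp_congr_ae hg.symm))
      _ = ∫ x in u ∩ v, g₁ x ∂μ := hPg₁
      _ = ∫ x in u ∩ v, g₂ x ∂μ := integral_congr_ae (ae_restrict_of_ae hg)

lemma condexp_sup_of_condIndep (hm' : m' ≤ mΩ) (hm₁ : m₁ ≤ mΩ) (hm₂ : m₂ ≤ mΩ)
    (h : CondIndep m' m₁ m₂ hm' μ)
    {f : Ω → ℝ} (hf : StronglyMeasurable[m₂] f) (hfi : Integrable f μ) :
    μ[f | m' ⊔ m₁] =ᵐ[μ] μ[f | m'] := by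
  have hsup : m' ⊔ m₁ ≤ mΩ := sup_le hm' hm₁
  set S : Set (Set Ω) := {A | ∃ s t, MeasurableSet[m'] s ∧ MeasurableSet[m₁] t ∧ A = s ∩ t}
    with hS
  have hgen : m' ⊔ m₁ = MeasurableSpace.generateFrom S := by
    refine le_antisymm (sup_le ?_ ?_) (MeasurableSpace.generateFrom_le ?_)
    · exact fun s hs => measurableSet_generateFrom ⟨s, Set.univ, hs, MeasurableSet.univ,
        (Set.inter_univ s).symm⟩
    · exact fun t ht => measurableSet_generateFrom ⟨Set.univ, t, MeasurableSet.univ, ht,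
        (Set.univ_inter t).symm⟩
    · rintro A ⟨s, t, hs, ht, rfl⟩
      exact ((le_sup_left : m' ≤ m' ⊔ m₁) s hs).inter ((le_sup_right : m₁ ≤ m' ⊔ m₁) t ht)
  have hpi : IsPiSystem S := by
    rintro A ⟨s₁, t₁, hs₁, ht₁, rfl⟩ B ⟨s₂, t₂, hs₂, ht₂, rfl⟩ _
    exact ⟨s₁ ∩ s₂, t₁ ∩ t₂, hs₁.inter hs₂, ht₁.inter ht₂, by
      rw [Set.inter_inter_inter_comm]⟩
  have hmain : ∀ A : Set Ω, MeasurableSet[m' ⊔ m₁] A →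
      ∫ x in A, (μ[f|m']) x ∂μ = ∫ x in A, f x ∂μ := by
    intro A hA
    refine MeasurableSpace.induction_on_inter (m := m' ⊔ m₁)
      (C := fun A _ => ∫ x in A, (μ[f|m']) x ∂μ = ∫ x in A, f x ∂μ) (s := S)
      hgen hpi ?_ ?_ ?_ ?_ A hA
    · simp
    · rintro B ⟨s, t, hs, ht, rfl⟩
      exact aux_setIntegral_condexp hm' hm₁ hm₂ h hs ht hf hfi
    · intro B hB hBeq
      have hBm : MeasurableSet B := hsup B hB
      have h1 := integral_add_compl hBm integrable_condExp (μ := μ) (f := μ[f|m'])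
      have h2 := integral_add_compl hBm hfi (μ := μ)
      have h3 : ∫ x, (μ[f|m']) x ∂μ = ∫ x, f x ∂μ := integral_condExp hm'
      linarith
    · intro g hdisj hgm hgeq
      rw [integral_iUnion (fun i => hsup _ (hgm i)) hdisj integrable_condExp.integrableOn,
        integral_iUnion (fun i => hsup _ (hgm i)) hdisj hfi.integrableOn]
      exact tsum_congr hgeq
  exact (ae_eq_condExp_of_forall_setIntegral_eq hsup hfi
    (fun s _ _ => integrable_condExp.integrableOn)
    (fun s hs _ => hmain s hs)
    ((stronglyMeasurable_condExp (m := m') (μ := μ) (f := f)).mono (le_sup_left : m' ≤ m' ⊔ m₁)).aestronglyMeasurable).symm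

end Aux


/-- Under a bicausal coupling, the martingale property with respect to the joint
filtration is equivalent to the martingale property with respect to the individual
filtrations. -/
theorem martingale_joint_iff_individual_of_bicausal
    {Ω : Type*} {mΩ : MeasurableSpace Ω} [StandardBorelSpace Ω]
    (μ : Measure Ω) [IsProbabilityMeasure μ]
    (N : ℕ) (X Y : ℕ → Ω → ℝ)
    (hXmeas : ∀ t, Measurable (X t)) (hYmeas : ∀ t, Measurable (Y t))
    (hXint : ∀ t, Integrable (X t) μ) (hYint : ∀ t, Integrable (Y t) μ)
    (FX FY : ℕ → MeasurableSpace Ω)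
    (hFX : ∀ t, FX t = ⨆ i ∈ Finset.Icc 1 t, MeasurableSpace.comap (X i) inferInstance)
    (hFY : ∀ t, FY t = ⨆ i ∈ Finset.Icc 1 t, MeasurableSpace.comap (Y i) inferInstance)
    (hFXle : ∀ t, FX t ≤ mΩ) (hFYle : ∀ t, FY t ≤ mΩ)
    -- causality: σ(Y_{1:t}) ⫫ σ(X_{t+1}) given σ(X_{1:t})
    (hcausal : ∀ t, 1 ≤ t → t ≤ N - 1 →
      CondIndep (FX t) (FY t) (MeasurableSpace.comap (X (t+1)) inferInstance) (hFXle t) μ)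
    -- anticausality: σ(X_{1:t}) ⫫ σ(Y_{t+1}) given σ(Y_{1:t})
    (hanticausal : ∀ t, 1 ≤ t → t ≤ N - 1 →
      CondIndep (FY t) (FX t) (MeasurableSpace.comap (Y (t+1)) inferInstance) (hFYle t) μ) :
    (∀ t, 1 ≤ t → t ≤ N - 1 →
        μ[X (t+1) | FX t ⊔ FY t] =ᵐ[μ] X t ∧ μ[Y (t+1) | FX t ⊔ FY t] =ᵐ[μ] Y t) ↔
    (∀ t, 1 ≤ t → t ≤ N - 1 →
        μ[X (t+1) | FX t] =ᵐ[μ] X t ∧ μ[Y (t+1) | FY t] =ᵐ[μ] Y t) := by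
  have hXsm : ∀ t, 1 ≤ t → StronglyMeasurable[FX t] (X t) := by
    intro t ht
    have hc : MeasurableSpace.comap (X t) inferInstance ≤ FX t := by
      rw [hFX t]
      exact le_iSup₂ (f := fun i (_ : i ∈ Finset.Icc 1 t) =>
        MeasurableSpace.comap (X i) inferInstance) t (Finset.mem_Icc.mpr ⟨ht, le_rfl⟩)
    exact (Measurable.of_comap_le hc).stronglyMeasurable
  have hYsm : ∀ t, 1 ≤ t → StronglyMeasurable[FY t] (Y t) := by
    intro t ht
    have hc : MeasurableSpace.comap (Y t) inferInstance ≤ FY t := by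
      rw [hFY t]
      exact le_iSup₂ (f := fun i (_ : i ∈ Finset.Icc 1 t) =>
        MeasurableSpace.comap (Y i) inferInstance) t (Finset.mem_Icc.mpr ⟨ht, le_rfl⟩)
    exact (Measurable.of_comap_le hc).stronglyMeasurable
  have hXcm : ∀ t, StronglyMeasurable[MeasurableSpace.comap (X t) inferInstance] (X t) := by
    intro t
    exact (Measurable.of_comap_le le_rfl).stronglyMeasurable
  have hYcm : ∀ t, StronglyMeasurable[MeasurableSpace.comap (Y t) inferInstance] (Y t) := by
    intro t
    exact (Measurable.of_comap_le le_rfl).stronglyMeasurable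
  constructor
  · intro h t ht1 ht2
    obtain ⟨hX, hY⟩ := h t ht1 ht2
    have hle : FX t ⊔ FY t ≤ mΩ := sup_le (hFXle t) (hFYle t)
    constructor
    · calc μ[X (t+1) | FX t]
          =ᵐ[μ] μ[μ[X (t+1) | FX t ⊔ FY t] | FX t] := (condExp_condExp_of_le le_sup_left hle).symm
        _ =ᵐ[μ] μ[X t | FX t] := condExp_congr_ae hX
        _ = X t := condExp_of_stronglyMeasurable (hFXle t) (hXsm t ht1) (hXint t)
    · calc μ[Y (t+1) | FY t]
          =ᵐ[μ] μ[μ[Y (t+1) | FX t ⊔ FY t] | FY t] := (condExp_condExp_of_le le_sup_right hle).symm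
        _ =ᵐ[μ] μ[Y t | FY t] := condExp_congr_ae hY
        _ = Y t := condExp_of_stronglyMeasurable (hFYle t) (hYsm t ht1) (hYint t)
  · intro h t ht1 ht2
    obtain ⟨hX, hY⟩ := h t ht1 ht2
    constructor
    · calc μ[X (t+1) | FX t ⊔ FY t]
          =ᵐ[μ] μ[X (t+1) | FX t] :=
            condexp_sup_of_condIndep (hFXle t) (hFYle t) (hXmeas (t+1)).comap_le
              (hcausal t ht1 ht2) (hXcm (t+1)) (hXint (t+1))
        _ =ᵐ[μ] X t := hX
    · calc μ[Y (t+1) | FX t ⊔ FY t]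
          = μ[Y (t+1) | FY t ⊔ FX t] := by rw [sup_comm]
        _ =ᵐ[μ] μ[Y (t+1) | FY t] :=
            condexp_sup_of_condIndep (hFYle t) (hFXle t) (hYmeas (t+1)).comap_le
              (hanticausal t ht1 ht2) (hYcm (t+1)) (hYint (t+1))
        _ =ᵐ[μ] Y t := hY
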